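/- Let C ≤ F_q^{n×m} be a rank-metric code with associated q-polymatroid rank function ρ_C(V) = (dim C − dim C(V^⊥))/m. Then the dual rank function ρ_C*(V) := dim V − ρ_C(F_q^n) + ρ_C(V^⊥) equals ρ_{C^⊥}(V) for all V ≤ F_q^n; that is, the dual q-polymatroid of M_C is M_{C^⊥}. -/

import Mathlib

open Module

variable {K : Type} [Field K] [Fintype K] {n m : ℕ}

/-- Orthogonal complement w.r.t. the standard symmetric bilinear form on `Fin n → K`. -/
def stdPerp (V : Submodule K (Fin n → K)) : Submodule K (Fin n → K) where
  carrier := {w | ∀ v ∈ V, ∑ i, v i * w i = 0}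
  zero_mem' := by intro v hv; simp
  add_mem' := by
    intro a b ha hb v hv
    simp [Pi.add_apply, mul_add, Finset.sum_add_distrib, ha v hv, hb v hv]
  smul_mem' := by
    intro c a ha v hv
    simp only [Pi.smul_apply, smul_eq_mul, mul_left_comm, ← Finset.mul_sum, ha v hv, mul_zero]

/-- Matrices all of whose columns lie in `V` (i.e. with column space contained in `V`). -/
def colIn (m : ℕ) (V : Submodule K (Fin n → K)) : Submodule K (Matrix (Fin n) (Fin m) K) where
  carrier := {X | ∀ j, (fun i => X i j) ∈ V}
  zero_mem' := by
    intro j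
    show (fun i => (0 : Matrix (Fin n) (Fin m) K) i j) ∈ V
    simp only [Matrix.zero_apply]
    exact V.zero_mem
  add_mem' := by
    intro a b ha hb j
    exact V.add_mem (ha j) (hb j)
  smul_mem' := by
    intro c X hX j
    exact V.smul_mem c (hX j)

/-- The shortened subcode `C(W) = {X ∈ C : colsp X ≤ W}`. -/
def shortened (C : Submodule K (Matrix (Fin n) (Fin m) K))
    (W : Submodule K (Fin n → K)) : Submodule K (Matrix (Fin n) (Fin m) K) :=
  C ⊓ colIn m W

/-- The `q`-polymatroid rank function `ρ_C(V) = (dim C − dim C(V^⊥))/m`. -/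
noncomputable def rhoCode (C : Submodule K (Matrix (Fin n) (Fin m) K))
    (V : Submodule K (Fin n → K)) : ℚ :=
  ((finrank K C : ℚ) - (finrank K (shortened C (stdPerp V)) : ℚ)) / m

/-- The trace-dual code `C^⊥ = {X : tr(X Yᵀ) = 0 for all Y ∈ C}`. -/
def dualCode (C : Submodule K (Matrix (Fin n) (Fin m) K)) :
    Submodule K (Matrix (Fin n) (Fin m) K) where
  carrier := {X | ∀ Y ∈ C, ∑ i, ∑ j, X i j * Y i j = 0}
  zero_mem' := by intro Y hY; simp
  add_mem' := by
    intro a b ha hb Y hY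
    simp [Matrix.add_apply, add_mul, Finset.sum_add_distrib, ha Y hY, hb Y hY]
  smul_mem' := by
    intro c X hX Y hY
    simp only [Matrix.smul_apply, smul_eq_mul, mul_assoc, ← Finset.mul_sum, hX Y hY, mul_zero]

set_option linter.unusedSectionVars false

section Gperp
variable {ι : Type} [Fintype ι] [DecidableEq ι]

def gperp (V : Submodule K (ι → K)) : Submodule K (ι → K) where
  carrier := {w | ∀ v ∈ V, ∑ i, v i * w i = 0}
  zero_mem' := by intro v hv; simp
  add_mem' := by
    intro a b ha hb v hv
    simp [Pi.add_apply, mul_add, Finset.sum_add_distrib, ha v hv, hb v hv]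
  smul_mem' := by
    intro c a ha v hv
    simp only [Pi.smul_apply, smul_eq_mul, mul_left_comm, ← Finset.mul_sum, ha v hv, mul_zero]

lemma mem_gperp {V : Submodule K (ι → K)} {w : ι → K} :
    w ∈ gperp V ↔ ∀ v ∈ V, ∑ i, v i * w i = 0 := Iff.rfl

lemma toDual_basisFun (w v : ι → K) :
    (Pi.basisFun K ι).toDual w v = ∑ i, v i * w i := by
  set b := Pi.basisFun K ι with hb
  conv_lhs => rw [← b.sum_repr v]
  rw [map_sum]
  simp only [map_smul, smul_eq_mul, Basis.toDual_apply_left, hb, Pi.basisFun_repr]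

lemma gperp_eq_comap (V : Submodule K (ι → K)) :
    gperp V = V.dualAnnihilator.comap
      ((Pi.basisFun K ι).toDualEquiv : (ι → K) →ₗ[K] Dual K (ι → K)) := by
  ext w
  simp only [mem_gperp, Submodule.mem_comap, Submodule.mem_dualAnnihilator,
    LinearEquiv.coe_coe, Basis.toDualEquiv_apply, toDual_basisFun]

lemma finrank_gperp_add (V : Submodule K (ι → K)) :
    finrank K (gperp V) + finrank K V = Fintype.card ι := by
  rw [gperp_eq_comap, Submodule.comap_equiv_eq_map_symm]
  rw [LinearEquiv.finrank_map_eq]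
  have h1 : finrank K ((ι → K) ⧸ V) = finrank K V.dualAnnihilator :=
    LinearEquiv.finrank_eq (R := K) (Subspace.quotEquivAnnihilator V)
  have h2 := Submodule.finrank_quotient_add_finrank V
  have h3 : finrank K (ι → K) = Fintype.card ι := Module.finrank_fintype_fun_eq_card K
  omega

lemma le_gperp_gperp (V : Submodule K (ι → K)) : V ≤ gperp (gperp V) := by
  intro v hv w hw
  have := hw v hv
  calc ∑ i, w i * v i = ∑ i, v i * w i := by simp [mul_comm]
  _ = 0 := this

lemma gperp_gperp (V : Submodule K (ι → K)) : gperp (gperp V) = V := by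
  refine (Submodule.eq_of_le_of_finrank_le (le_gperp_gperp V) ?_).symm
  have h1 := finrank_gperp_add (gperp V)
  have h2 := finrank_gperp_add V
  omega

lemma gperp_top : gperp (⊤ : Submodule K (ι → K)) = ⊥ := by
  have h := finrank_gperp_add (⊤ : Submodule K (ι → K))
  have ht : finrank K (⊤ : Submodule K (ι → K)) = Fintype.card ι := by
    rw [finrank_top]; exact Module.finrank_fintype_fun_eq_card K
  have : finrank K (gperp (⊤ : Submodule K (ι → K))) = 0 := by omega
  exact Submodule.finrank_eq_zero.mp this

lemma gperp_sup (U W : Submodule K (ι → K)) : gperp (U ⊔ W) = gperp U ⊓ gperp W := by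
  ext w
  simp only [Submodule.mem_inf, mem_gperp]
  constructor
  · exact fun h => ⟨fun v hv => h v (Submodule.mem_sup_left hv),
      fun v hv => h v (Submodule.mem_sup_right hv)⟩
  · rintro ⟨h1, h2⟩ v hv
    rcases Submodule.mem_sup.mp hv with ⟨a, ha, b, hb, rfl⟩
    simp [Pi.add_apply, add_mul, Finset.sum_add_distrib, h1 a ha, h2 b hb]

end Gperp

lemma stdPerp_eq_gperp (V : Submodule K (Fin n → K)) : stdPerp V = gperp V := rfl

def colInEquiv (V : Submodule K (Fin n → K)) : ↥(colIn m V) ≃ₗ[K] (Fin m → V) where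
  toFun X := fun j => ⟨fun i => X.1 i j, X.2 j⟩
  map_add' := fun X Y => rfl
  map_smul' := fun c X => rfl
  invFun f := ⟨fun i j => (f j).1 i, fun j => (f j).2⟩
  left_inv := fun X => rfl
  right_inv := fun f => rfl

lemma finrank_colIn (V : Submodule K (Fin n → K)) :
    finrank K (colIn m V) = m * finrank K V := by
  rw [LinearEquiv.finrank_eq (colInEquiv V)]
  simp [Module.finrank_pi_fintype, Finset.sum_const, mul_comm]

lemma colIn_bot : colIn m (⊥ : Submodule K (Fin n → K)) = ⊥ := by
  ext X
  constructor
  · intro h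
    have : ∀ j, (fun i => X i j) = 0 := fun j => Submodule.mem_bot K |>.mp (h j)
    have : X = 0 := by
      funext i j
      exact congrFun (this j) i
    rw [Submodule.mem_bot]; exact this
  · rintro h j
    rw [Submodule.mem_bot] at h
    subst h
    have hz : (fun i => (0 : Matrix (Fin n) (Fin m) K) i j) = (0 : Fin n → K) := rfl
    rw [hz]
    exact Submodule.zero_mem _

def matE : Matrix (Fin n) (Fin m) K ≃ₗ[K] (Fin n × Fin m → K) where
  toFun X := fun p => X p.1 p.2
  invFun f := fun i j => f (i, j)
  map_add' X Y := rfl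
  map_smul' c X := rfl
  left_inv X := rfl
  right_inv f := rfl

lemma matE_sum (X Y : Matrix (Fin n) (Fin m) K) :
    (∑ p : Fin n × Fin m, matE Y p * matE X p) = ∑ i, ∑ j, X i j * Y i j := by
  rw [Fintype.sum_prod_type]
  exact Finset.sum_congr rfl fun i _ => Finset.sum_congr rfl fun j _ => mul_comm _ _

lemma dualCode_eq_comap (C : Submodule K (Matrix (Fin n) (Fin m) K)) :
    dualCode C = (gperp (C.map matE.toLinearMap)).comap
      matE.toLinearMap := by
  ext X
  simp only [Submodule.mem_comap, LinearEquiv.coe_coe, mem_gperp]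
  constructor
  · intro h v hv
    obtain ⟨Y, hY, rfl⟩ := Submodule.mem_map.mp hv
    show (∑ p : Fin n × Fin m, matE Y p * matE X p) = 0
    rw [matE_sum]
    exact h Y hY
  · intro h Y hY
    rw [← matE_sum]
    exact h (matE Y) (Submodule.mem_map.mpr ⟨Y, hY, rfl⟩)


lemma finrank_dualCode_add (C : Submodule K (Matrix (Fin n) (Fin m) K)) :
    finrank K (dualCode C) + finrank K C = n * m := by
  have h2 := LinearEquiv.finrank_map_eq (R := K) matE C
  have h1 := finrank_gperp_add (ι := Fin n × Fin m) (C.map matE.toLinearMap)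
  rw [h2] at h1
  simp only [Fintype.card_prod, Fintype.card_fin] at h1
  rw [dualCode_eq_comap, Submodule.comap_equiv_eq_map_symm, LinearEquiv.finrank_map_eq]
  exact h1

lemma dualCode_sup (C D : Submodule K (Matrix (Fin n) (Fin m) K)) :
    dualCode (C ⊔ D) = dualCode C ⊓ dualCode D := by
  ext X
  simp only [Submodule.mem_inf]
  constructor
  · exact fun h => ⟨fun Y hY => h Y (Submodule.mem_sup_left hY),
      fun Y hY => h Y (Submodule.mem_sup_right hY)⟩
  · rintro ⟨h1, h2⟩ Y hY
    rcases Submodule.mem_sup.mp hY with ⟨a, ha, b, hb, rfl⟩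
    have e : ∀ i j, X i j * (a + b) i j = X i j * a i j + X i j * b i j := by
      intro i j; simp [Matrix.add_apply, mul_add]
    simp only [e, Finset.sum_add_distrib, h1 a ha, h2 b hb, add_zero]

lemma dualCode_colIn (V : Submodule K (Fin n → K)) :
    dualCode (colIn m V) = colIn m (stdPerp V) := by
  ext X
  constructor
  · intro h j v hv
    classical
    set Y : Matrix (Fin n) (Fin m) K := fun i j' => if j' = j then v i else 0 with hY
    have hYmem : Y ∈ colIn m V := by
      intro j'
      by_cases hj : j' = j
      · subst hj
        have : (fun i => Y i j') = v := by funext i; simp [hY]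
        rw [this]; exact hv
      · have : (fun i => Y i j') = (0 : Fin n → K) := by funext i; simp [hY, hj]
        rw [this]; exact Submodule.zero_mem _
    have h0 := h Y hYmem
    have h1 : ∀ i, ∑ j', X i j' * Y i j' = v i * X i j := by
      intro i
      simp [hY, mul_comm, Finset.sum_ite_eq']
    rw [Finset.sum_congr rfl fun i _ => h1 i] at h0
    exact h0
  · intro h Y hY
    rw [Finset.sum_comm]
    refine Finset.sum_eq_zero fun j _ => ?_
    have h0 := h j _ (hY j)
    calc ∑ i, X i j * Y i j = ∑ i, Y i j * X i j := by
          exact Finset.sum_congr rfl fun i _ => mul_comm _ _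
    _ = 0 := h0


/-- the dual rank function `ρ_C*(V) = dim V − ρ_C(F_q^n) + ρ_C(V^⊥)` equals
`ρ_{C^⊥}(V)`, i.e. the dual `q`-polymatroid of `M_C` is `M_{C^⊥}`. -/
theorem dual_qPolymatroid_eq_qPolymatroid_dualCode (hm : 0 < m)
    (C : Submodule K (Matrix (Fin n) (Fin m) K)) (V : Submodule K (Fin n → K)) :
    (finrank K V : ℚ) - rhoCode C (⊤ : Submodule K (Fin n → K)) + rhoCode C (stdPerp V)
      = rhoCode (dualCode C) V := by
  have hVV : stdPerp (stdPerp V) = V := by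
    rw [stdPerp_eq_gperp, stdPerp_eq_gperp, gperp_gperp]
  have hT : stdPerp (⊤ : Submodule K (Fin n → K)) = ⊥ := by
    rw [stdPerp_eq_gperp, gperp_top]
  have e1 : shortened C (stdPerp (⊤ : Submodule K (Fin n → K))) = ⊥ := by
    rw [shortened, hT, colIn_bot, inf_bot_eq]
  have e2 : shortened C (stdPerp (stdPerp V)) = C ⊓ colIn m V := by rw [shortened, hVV]
  have e3 : shortened (dualCode C) (stdPerp V) = dualCode (C ⊔ colIn m V) := by
    rw [shortened, ← dualCode_colIn, ← dualCode_sup]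
  have f1 : finrank K (shortened C (stdPerp (⊤ : Submodule K (Fin n → K)))) = 0 := by
    rw [e1]; exact finrank_bot K _
  have f2 : finrank K (shortened C (stdPerp (stdPerp V)))
      = finrank K (C ⊓ colIn m V : Submodule K (Matrix (Fin n) (Fin m) K)) := by rw [e2]
  have f3 : finrank K (shortened (dualCode C) (stdPerp V))
      = finrank K (dualCode (C ⊔ colIn m V)) := by rw [e3]
  unfold rhoCode
  rw [f1, f2, f3]
  have q1 := finrank_dualCode_add C
  have q2 := finrank_dualCode_add (C ⊔ colIn m V)
  have q3 := Submodule.finrank_sup_add_finrank_inf_eq C (colIn m V)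
  have q4 := finrank_colIn (m := m) V
  have hm' : (m : ℚ) ≠ 0 := Nat.cast_ne_zero.mpr hm.ne'
  have Q1 : (finrank K (dualCode C) : ℚ) + finrank K C = n * m := by exact_mod_cast q1
  have Q2 : (finrank K (dualCode (C ⊔ colIn m V)) : ℚ)
      + finrank K (C ⊔ colIn m V : Submodule K (Matrix (Fin n) (Fin m) K)) = n * m := by
    exact_mod_cast q2
  have Q3 : (finrank K (C ⊔ colIn m V : Submodule K (Matrix (Fin n) (Fin m) K)) : ℚ)
      + finrank K (C ⊓ colIn m V : Submodule K (Matrix (Fin n) (Fin m) K))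
      = finrank K C + finrank K (colIn m V) := by exact_mod_cast q3
  have Q4 : (finrank K (colIn m V) : ℚ) = m * finrank K V := by exact_mod_cast q4
  field_simp
  ring_nf
  ring_nf at Q1 Q2 Q3 Q4
  linarith
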